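/- For a connected graph G of order n ≥ 4, ξ^c(G) = 3(n-1) if and only if G is isomorphic to the star S_n (one vertex adjacent to all n-1 others, which are pairwise non-adjacent). -/

import Mathlib

open SimpleGraph Finset

/-- Degree of a vertex (classically decidable adjacency). -/
noncomputable def deg {V : Type*} (G : SimpleGraph V) [Fintype V] (v : V) : ℕ :=
  letI := Classical.decRel G.Adj; G.degree v

/-- Eccentricity of a vertex: maximum distance to any vertex. -/
noncomputable def ecc {V : Type*} (G : SimpleGraph V) [Fintype V] (v : V) : ℕ :=
  Finset.univ.sup (fun w => G.dist v w)

/-- Eccentric connectivity index. -/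
noncomputable def eci {V : Type*} (G : SimpleGraph V) [Fintype V] : ℕ :=
  ∑ v, deg G v * ecc G v

/-- Number of pending vertices (vertices of degree 1). -/
noncomputable def pendingCount {V : Type*} (G : SimpleGraph V) [Fintype V] : ℕ :=
  (Finset.univ.filter (fun v => deg G v = 1)).card

open scoped Classical

lemma deg_eq {V : Type*} (G : SimpleGraph V) [Fintype V] (v : V) :
    deg G v = (Finset.univ.filter (fun w => G.Adj v w)).card := by
  simp only [deg]
  rw [← SimpleGraph.card_neighborSet_eq_degree]
  exact Fintype.card_of_subtype _ (by simp)

section basics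

variable {n : ℕ} {G : SimpleGraph (Fin n)}

lemma deg_center {c : Fin n} (hcen : ∀ w, w ≠ c → G.Adj c w) : deg G c = n - 1 := by
  rw [deg_eq]
  have : (Finset.univ.filter (fun w => G.Adj c w)) = Finset.univ.erase c := by
    ext w
    simp only [mem_filter, mem_univ, true_and, mem_erase, and_true]
    exact ⟨fun h => (G.ne_of_adj h).symm, fun h => hcen w h⟩
  rw [this, Finset.card_erase_of_mem (mem_univ c)]
  simp

lemma deg_pos (hc : G.Connected) (hn : 2 ≤ n) (v : Fin n) : 1 ≤ deg G v := by
  obtain ⟨w, hw⟩ := Fintype.exists_ne_of_one_lt_card (by simp; omega) v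
  obtain ⟨p⟩ := hc v w
  have hnil : ¬ p.Nil := SimpleGraph.Walk.not_nil_of_ne (Ne.symm hw)
  have hadj : G.Adj v (p.getVert 1) := p.adj_snd hnil
  rw [deg_eq, Nat.one_le_iff_ne_zero, Ne, Finset.card_eq_zero]
  intro h
  have := Finset.eq_empty_iff_forall_notMem.mp h (p.getVert 1)
  simp [hadj] at this

lemma dist_le_ecc (v w : Fin n) : G.dist v w ≤ ecc G v :=
  Finset.le_sup (mem_univ w)

lemma ecc_pos (hc : G.Connected) (hn : 2 ≤ n) (v : Fin n) : 1 ≤ ecc G v := by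
  obtain ⟨w, hw⟩ := Fintype.exists_ne_of_one_lt_card (by simp; omega) v
  calc 1 ≤ G.dist v w := hc.pos_dist_of_ne (Ne.symm hw)
    _ ≤ ecc G v := dist_le_ecc v w

lemma two_le_dist (hc : G.Connected) {v w : Fin n} (hvw : v ≠ w) (hadj : ¬ G.Adj v w) :
    2 ≤ G.dist v w := by
  have h0 : G.dist v w ≠ 0 := Nat.pos_iff_ne_zero.mp (hc.pos_dist_of_ne hvw)
  have h1 : G.dist v w ≠ 1 := fun h => hadj (SimpleGraph.dist_eq_one_iff_adj.mp h)
  omega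

lemma ecc_center (hc : G.Connected) (hn : 2 ≤ n) {c : Fin n}
    (hcen : ∀ w, w ≠ c → G.Adj c w) : ecc G c = 1 := by
  refine le_antisymm (Finset.sup_le fun w _ => ?_) (ecc_pos hc hn c)
  rcases eq_or_ne w c with rfl | hw
  · simp [SimpleGraph.dist_self]
  · exact le_of_eq (SimpleGraph.dist_eq_one_iff_adj.mpr (hcen w hw))

lemma ecc_leaf (hc : G.Connected) (hn : 3 ≤ n) {c v : Fin n}
    (hcen : ∀ w, w ≠ c → G.Adj c w)
    (hnone : ∀ a b : Fin n, a ≠ c → b ≠ c → ¬ G.Adj a b) (hv : v ≠ c) :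
    ecc G v = 2 := by
  refine le_antisymm (Finset.sup_le fun w _ => ?_) ?_
  · calc G.dist v w ≤ G.dist v c + G.dist c w := hc.dist_triangle
      _ ≤ 1 + 1 := by
          gcongr
          · exact le_of_eq (SimpleGraph.dist_eq_one_iff_adj.mpr ((hcen v hv).symm))
          · rcases eq_or_ne w c with rfl | hw
            · simp [SimpleGraph.dist_self]
            · exact le_of_eq (SimpleGraph.dist_eq_one_iff_adj.mpr (hcen w hw))
  · -- find w ≠ v, w ≠ c
    have hcard : (Finset.univ \ {v, c} : Finset (Fin n)).Nonempty := by
      rw [← Finset.card_pos, Finset.card_sdiff_of_subset (by simp)]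
      have : ({v, c} : Finset (Fin n)).card ≤ 2 := Finset.card_insert_le _ _ |>.trans (by simp)
      have : (Finset.univ : Finset (Fin n)).card = n := by simp
      omega
    obtain ⟨w, hw⟩ := hcard
    simp only [Finset.mem_sdiff, Finset.mem_insert, Finset.mem_singleton, mem_univ, true_and,
      not_or] at hw
    calc 2 ≤ G.dist v w := two_le_dist hc (Ne.symm hw.1) (hnone v w hv hw.2)
      _ ≤ ecc G v := dist_le_ecc v w

lemma deg_leaf {c v : Fin n}
    (hcen : ∀ w, w ≠ c → G.Adj c w)
    (hnone : ∀ a b : Fin n, a ≠ c → b ≠ c → ¬ G.Adj a b) (hv : v ≠ c) :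
    deg G v = 1 := by
  rw [deg_eq]
  have : (Finset.univ.filter (fun w => G.Adj v w)) = {c} := by
    ext w
    simp only [mem_filter, mem_univ, true_and, Finset.mem_singleton]
    constructor
    · intro h
      by_contra hw
      exact hnone v w hv hw h
    · rintro rfl
      exact (hcen v hv).symm
  rw [this]; simp

/-- The eci computation for a star. -/
lemma eci_star (hc : G.Connected) (hn : 3 ≤ n) {c : Fin n}
    (hcen : ∀ w, w ≠ c → G.Adj c w)
    (hnone : ∀ a b : Fin n, a ≠ c → b ≠ c → ¬ G.Adj a b) :
    eci G = 3 * (n - 1) := by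
  have hn2 : 2 ≤ n := by omega
  rw [eci, ← Finset.add_sum_erase _ _ (mem_univ c)]
  rw [deg_center hcen, ecc_center hc hn2 hcen]
  rw [Finset.sum_congr rfl (fun v hv => by
    rw [deg_leaf hcen hnone (Finset.ne_of_mem_erase hv),
      ecc_leaf hc hn hcen hnone (Finset.ne_of_mem_erase hv)])]
  rw [Finset.sum_const, Finset.card_erase_of_mem (mem_univ c)]
  simp only [card_univ, Fintype.card_fin, smul_eq_mul, mul_one]
  omega

lemma sum_deg_lb {n : ℕ} {G : SimpleGraph (Fin n)} (hc : G.Connected) (hn : 1 ≤ n) :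
    2 * (n - 1) ≤ ∑ v, deg G v := by
  have v0 : Fin n := ⟨0, by omega⟩
  have hdeg : ∀ v, deg G v = G.degree v := by
    intro v
    rw [deg_eq, ← SimpleGraph.card_neighborSet_eq_degree]
    exact (Fintype.card_of_subtype _ (by simp)).symm
  have hsum : ∑ v, deg G v = 2 * G.edgeFinset.card := by
    rw [Finset.sum_congr rfl (fun v _ => hdeg v)]
    exact G.sum_degrees_eq_twice_card_edges
  rw [hsum]
  have hkey : n - 1 ≤ G.edgeFinset.card := by
    -- choose geodesics to v0
    choose p hp using fun v => hc.exists_walk_length_eq_dist v v0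
    have hlt : ∀ v, v ≠ v0 → G.dist ((p v).getVert 1) v0 < G.dist v v0 := by
      intro v hv
      have hnil : ¬ (p v).Nil := SimpleGraph.Walk.not_nil_of_ne hv
      have h1 : G.dist ((p v).getVert 1) v0 ≤ (p v).tail.length := SimpleGraph.dist_le (p v).tail
      have h2 := SimpleGraph.Walk.length_tail_add_one hnil
      have h3 : 0 < G.dist v v0 := hc.pos_dist_of_ne hv
      have h4 : (p v).tail.length + 1 = G.dist v v0 := by rw [h2, hp v]
      -- tail : Walk (getVert 1) v0
      omega
    have hinj : Set.InjOn (fun v => s(v, (p v).getVert 1)) (Finset.univ.erase v0 : Finset (Fin n)) := by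
      intro a ha b hb hab
      simp only [Finset.coe_erase, Set.mem_diff, Finset.mem_coe, Finset.mem_univ,
        Set.mem_singleton_iff] at ha hb
      simp only [Sym2.eq_iff] at hab
      rcases hab with ⟨h1, _⟩ | ⟨h1, h2⟩
      · exact h1
      · exfalso
        have hA := hlt a (by simpa using ha)
        have hB := hlt b (by simpa using hb)
        rw [h2] at hA
        rw [← h1] at hB
        omega
    have := Finset.card_le_card_of_injOn (t := G.edgeFinset) (fun v => s(v, (p v).getVert 1))
      (fun v hv => by
        have hnil : ¬ (p v).Nil :=
          SimpleGraph.Walk.not_nil_of_ne (Finset.ne_of_mem_erase hv)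
        simp only [Finset.mem_coe, SimpleGraph.mem_edgeFinset, SimpleGraph.mem_edgeSet]
        exact (p v).adj_snd hnil)
      hinj
    simpa [Finset.card_erase_of_mem] using this
  omega


end basics

section forward
variable {n : ℕ} {G : SimpleGraph (Fin n)}

lemma exists_center (hn : 4 ≤ n) (hc : G.Connected) (h : eci G = 3 * (n - 1)) :
    ∃ c : Fin n, (∀ w, w ≠ c → G.Adj c w) ∧
      (∀ a b : Fin n, a ≠ c → b ≠ c → ¬ G.Adj a b) := by
  have hn2 : 2 ≤ n := by omega
  -- Step 1: there is a universal vertex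
  obtain ⟨c, hcen⟩ : ∃ c : Fin n, ∀ w, w ≠ c → G.Adj c w := by
    by_contra hno
    push_neg at hno
    have hecc : ∀ v, 2 ≤ ecc G v := by
      intro v
      obtain ⟨w, hw, hnadj⟩ := hno v
      calc 2 ≤ G.dist v w := two_le_dist hc (Ne.symm hw) hnadj
        _ ≤ ecc G v := dist_le_ecc v w
    have h2 : 2 * ∑ v, deg G v ≤ eci G := by
      rw [eci, Finset.mul_sum]
      refine Finset.sum_le_sum fun v _ => ?_
      rw [mul_comm]
      exact Nat.mul_le_mul_left _ (hecc v)
    have h3 := sum_deg_lb hc (by omega)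
    omega
  refine ⟨c, hcen, ?_⟩
  -- Step 2: c is the only universal vertex
  have huniq : ∀ d : Fin n, d ≠ c → ∃ w, w ≠ d ∧ ¬ G.Adj d w := by
    intro d hd
    by_contra hno
    push_neg at hno
    -- d also universal
    have hcend : ∀ w, w ≠ d → G.Adj d w := fun w hw => hno w hw
    have hS : ∑ v, deg G v ≤ eci G := by
      rw [eci]
      refine Finset.sum_le_sum fun v _ => ?_
      nth_rewrite 1 [← mul_one (deg G v)]
      exact Nat.mul_le_mul_left _ (ecc_pos hc hn2 v)
    have hdinc : d ∈ Finset.univ.erase c := Finset.mem_erase.mpr ⟨hd, mem_univ d⟩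
    have hsplit : ∑ v, deg G v =
        deg G c + (deg G d + ∑ v ∈ (Finset.univ.erase c).erase d, deg G v) := by
      rw [Finset.add_sum_erase _ _ hdinc, Finset.add_sum_erase _ _ (mem_univ c)]
    have hdeg2 : ∀ v ∈ (Finset.univ.erase c).erase d, 2 ≤ deg G v := by
      intro v hv
      have hvd : v ≠ d := (Finset.mem_erase.mp hv).1
      have hvc : v ≠ c := (Finset.mem_erase.mp (Finset.mem_erase.mp hv).2).1
      rw [deg_eq]
      have hsub : ({c, d} : Finset (Fin n)) ⊆
          Finset.univ.filter (fun w => G.Adj v w) := by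
        intro x hx
        simp only [Finset.mem_insert, Finset.mem_singleton] at hx
        rcases hx with rfl | rfl
        · simp [(hcen v hvc).symm]
        · simp [(hcend v hvd).symm]
      calc 2 = ({c, d} : Finset (Fin n)).card := by
            rw [Finset.card_insert_of_notMem (by simpa using Ne.symm hd)]; simp
        _ ≤ _ := Finset.card_le_card hsub
    have hcard : ((Finset.univ.erase c).erase d).card = n - 2 := by
      rw [Finset.card_erase_of_mem hdinc, Finset.card_erase_of_mem (mem_univ c)]
      simp; omega
    have hrest : (n - 2) * 2 ≤ ∑ v ∈ (Finset.univ.erase c).erase d, deg G v := by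
      have := Finset.card_nsmul_le_sum ((Finset.univ.erase c).erase d)
        (fun v => deg G v) 2 hdeg2
      rwa [hcard, smul_eq_mul] at this
    have hdc : deg G c = n - 1 := deg_center hcen
    have hdd : deg G d = n - 1 := deg_center hcend
    omega
  -- Step 3: conclude non-adjacency away from c
  have hecc2 : ∀ v, v ≠ c → ecc G v = 2 := by
    intro v hv
    refine le_antisymm (Finset.sup_le fun w _ => ?_) ?_
    · calc G.dist v w ≤ G.dist v c + G.dist c w := hc.dist_triangle
        _ ≤ 1 + 1 := by
            gcongr
            · exact le_of_eq (SimpleGraph.dist_eq_one_iff_adj.mpr ((hcen v hv).symm))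
            · rcases eq_or_ne w c with rfl | hw
              · simp [SimpleGraph.dist_self]
              · exact le_of_eq (SimpleGraph.dist_eq_one_iff_adj.mpr (hcen w hw))
    · obtain ⟨w, hw, hnadj⟩ := huniq v hv
      calc 2 ≤ G.dist v w := two_le_dist hc (Ne.symm hw) hnadj
        _ ≤ ecc G v := dist_le_ecc v w
  have heccc : ecc G c = 1 := ecc_center hc hn2 hcen
  have hdc : deg G c = n - 1 := deg_center hcen
  have hsum1 : eci G = deg G c * ecc G c + ∑ v ∈ Finset.univ.erase c, deg G v * ecc G v :=
    (Finset.add_sum_erase _ _ (mem_univ c)).symm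
  have hsum2 : ∑ v ∈ Finset.univ.erase c, deg G v * ecc G v =
      2 * ∑ v ∈ Finset.univ.erase c, deg G v := by
    rw [Finset.mul_sum]
    exact Finset.sum_congr rfl fun v hv => by
      rw [hecc2 v (Finset.ne_of_mem_erase hv), mul_comm]
  have hS' : ∑ v ∈ Finset.univ.erase c, deg G v = n - 1 := by
    rw [hsum2, hdc, heccc] at hsum1
    omega
  intro a b ha hb hab
  have hdega : 2 ≤ deg G a := by
    rw [deg_eq]
    have hsub : ({c, b} : Finset (Fin n)) ⊆
        Finset.univ.filter (fun w => G.Adj a w) := by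
      intro x hx
      simp only [Finset.mem_insert, Finset.mem_singleton] at hx
      rcases hx with rfl | rfl
      · simp [(hcen a ha).symm]
      · simp [hab]
    calc 2 = ({c, b} : Finset (Fin n)).card := by
          rw [Finset.card_insert_of_notMem (by simpa using Ne.symm hb)]; simp
      _ ≤ _ := Finset.card_le_card hsub
  have hainc : a ∈ Finset.univ.erase c := Finset.mem_erase.mpr ⟨ha, mem_univ a⟩
  have hsplit : ∑ v ∈ Finset.univ.erase c, deg G v =
      deg G a + ∑ v ∈ (Finset.univ.erase c).erase a, deg G v :=
    (Finset.add_sum_erase _ _ hainc).symm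
  have hcard : ((Finset.univ.erase c).erase a).card = n - 2 := by
    rw [Finset.card_erase_of_mem hainc, Finset.card_erase_of_mem (mem_univ c)]
    simp; omega
  have hrest : (n - 2) * 1 ≤ ∑ v ∈ (Finset.univ.erase c).erase a, deg G v := by
    have := Finset.card_nsmul_le_sum ((Finset.univ.erase c).erase a)
      (fun v => deg G v) 1 (fun v _ => deg_pos hc hn2 v)
    rwa [hcard, smul_eq_mul] at this
  omega

end forward

lemma iso_of_center {n : ℕ} {G : SimpleGraph (Fin n)} (hn : 1 ≤ n) {c : Fin n}
    (hcen : ∀ w, w ≠ c → G.Adj c w)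
    (hnone : ∀ a b : Fin n, a ≠ c → b ≠ c → ¬ G.Adj a b) :
    Nonempty (G ≃g completeBipartiteGraph (Fin 1) (Fin (n - 1))) := by
  have eL : {v : Fin n // v = c} ≃ Fin 1 :=
    Fintype.equivFinOfCardEq (by simp [Fintype.card_subtype_eq])
  have eR : {v : Fin n // ¬ v = c} ≃ Fin (n - 1) :=
    Fintype.equivFinOfCardEq (by
      rw [Fintype.card_subtype_compl, Fintype.card_subtype_eq]; simp)
  let e : Fin n ≃ Fin 1 ⊕ Fin (n - 1) :=
    (Equiv.sumCompl (· = c)).symm.trans (Equiv.sumCongr eL eR)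
  have hinl : ∀ v : Fin n, v = c → ∃ i, e v = Sum.inl i := by
    intro v h
    refine ⟨eL ⟨v, h⟩, ?_⟩
    show Sum.map (⇑eL) (⇑eR) ((Equiv.sumCompl fun x => x = c).symm v) = Sum.inl (eL ⟨v, h⟩)
    rw [Equiv.sumCompl_symm_apply_of_pos (p := fun x => x = c) (a := v) h]
    rfl
  have hinr : ∀ v : Fin n, v ≠ c → ∃ j, e v = Sum.inr j := by
    intro v h
    refine ⟨eR ⟨v, h⟩, ?_⟩
    show Sum.map (⇑eL) (⇑eR) ((Equiv.sumCompl fun x => x = c).symm v) = Sum.inr (eR ⟨v, h⟩)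
    rw [Equiv.sumCompl_symm_apply_of_neg (p := fun x => x = c) (a := v) h]
    rfl
  refine ⟨⟨e, ?_⟩⟩
  intro a b
  by_cases ha : a = c <;> by_cases hb : b = c
  · obtain ⟨i, hi⟩ := hinl a ha
    obtain ⟨j, hj⟩ := hinl b hb
    subst ha; subst hb
    simp [hi, hj, completeBipartiteGraph]
  · obtain ⟨i, hi⟩ := hinl a ha
    obtain ⟨j, hj⟩ := hinr b hb
    subst ha
    simp only [hi, hj, completeBipartiteGraph]
    simp [(hcen b hb).symm.symm]
  · obtain ⟨i, hi⟩ := hinr a ha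
    obtain ⟨j, hj⟩ := hinl b hb
    subst hb
    simp only [hi, hj, completeBipartiteGraph]
    simp [(hcen a ha).symm]
  · obtain ⟨i, hi⟩ := hinr a ha
    obtain ⟨j, hj⟩ := hinr b hb
    simp only [hi, hj, completeBipartiteGraph]
    simp [hnone a b ha hb]

lemma center_of_iso {n : ℕ} {G : SimpleGraph (Fin n)}
    (e : G ≃g completeBipartiteGraph (Fin 1) (Fin (n - 1))) :
    ∃ c : Fin n, (∀ w, w ≠ c → G.Adj c w) ∧
      (∀ a b : Fin n, a ≠ c → b ≠ c → ¬ G.Adj a b) := by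
  refine ⟨e.symm (Sum.inl 0), ?_, ?_⟩
  · intro w hw
    have hne : e w ≠ Sum.inl 0 := by
      intro h
      apply hw
      have := congrArg e.symm h
      simpa using this
    rw [← e.map_adj_iff]
    have : e (e.symm (Sum.inl 0)) = Sum.inl 0 := by simp
    rw [this]
    rcases he : e w with i | j
    · exact absurd (by rw [he, Subsingleton.elim i 0]) hne
    · simp [completeBipartiteGraph]
  · intro a b ha hb hab
    obtain ⟨i, hi⟩ : ∃ j, e a = Sum.inr j := by
      rcases he : e a with i | j
      · exfalso; apply ha
        have : i = 0 := Subsingleton.elim _ _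
        subst this
        have := congrArg e.symm he
        simpa using this
      · exact ⟨j, rfl⟩
    obtain ⟨j, hj⟩ : ∃ j, e b = Sum.inr j := by
      rcases he : e b with i | j
      · exfalso; apply hb
        have : i = 0 := Subsingleton.elim _ _
        subst this
        have := congrArg e.symm he
        simpa using this
      · exact ⟨j, rfl⟩
    have := e.map_adj_iff.mpr hab
    rw [hi, hj] at this
    simp [completeBipartiteGraph] at this


theorem stmt1 (n : ℕ) (hn : 4 ≤ n) (G : SimpleGraph (Fin n)) (hc : G.Connected) :
    eci G = 3 * (n - 1) ↔
      Nonempty (G ≃g completeBipartiteGraph (Fin 1) (Fin (n - 1))) := by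
  constructor
  · intro h
    obtain ⟨c, hcen, hnone⟩ := exists_center hn hc h
    exact iso_of_center (by omega) hcen hnone
  · rintro ⟨e⟩
    obtain ⟨c, hcen, hnone⟩ := center_of_iso e
    exact eci_star hc (by omega) hcen hnone
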